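/- Let ψ be a unit vector, Π an orthogonal projection, and θ ∈ (0, π/2] with sin θ = ‖Πψ‖. In the two-dimensional subspace spanned by the unit vectors Πψ/‖Πψ‖ and (I−Π)ψ/‖(I−Π)ψ‖ (assuming both are nonzero), the operator −R_ψ R_Π with R_ψ = 2|ψ⟩⟨ψ|−I and R_Π = 2Π−I acts as a rotation by angle 2θ; consequently, (−R_ψ R_Π)^m ψ = sin((2m+1)θ)·Πψ/‖Πψ‖ + cos((2m+1)θ)·(I−Π)ψ/‖(I−Π)ψ‖. -/
import Mathlib


open Real RealInnerProductSpace

/-- Rotation lemma for amplitude amplification: the Grover iterate `−R_ψ R_Π`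
acts as a rotation by `2θ` in the plane spanned by `Πψ/‖Πψ‖` and
`(I−Π)ψ/‖(I−Π)ψ‖`, so that `m` iterations rotate `ψ` to angle `(2m+1)θ`. -/
theorem grover_iterate_rotation
    {E : Type*} [NormedAddCommGroup E] [InnerProductSpace ℝ E] [CompleteSpace E]
    (ψ : E) (hψ : ‖ψ‖ = 1)
    (P : E →L[ℝ] E) (hPsa : IsSelfAdjoint P) (hP2 : P * P = P)
    (hPψ : P ψ ≠ 0) (hPψ' : ψ - P ψ ≠ 0)
    (θ : ℝ) (hθ0 : 0 < θ) (hθ1 : θ ≤ π / 2) (hsin : Real.sin θ = ‖P ψ‖)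
    (Rψ RP : E →L[ℝ] E)
    (hRψ : ∀ x, Rψ x = (2 * ⟪ψ, x⟫) • ψ - x)
    (hRP : RP = (2 : ℝ) • P - 1)
    (m : ℕ) :
    ((-(Rψ * RP)) ^ m) ψ =
      Real.sin ((2 * m + 1) * θ) • (‖P ψ‖⁻¹ • P ψ) +
      Real.cos ((2 * m + 1) * θ) • (‖ψ - P ψ‖⁻¹ • (ψ - P ψ)) := by
  obtain ⟨a, ha_def⟩ : ∃ a : ℝ, a = ‖P ψ‖ := ⟨_, rfl⟩
  obtain ⟨b, hb_def⟩ : ∃ b : ℝ, b = ‖ψ - P ψ‖ := ⟨_, rfl⟩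
  obtain ⟨u, hu_def⟩ : ∃ u : E, u = a⁻¹ • P ψ := ⟨_, rfl⟩
  obtain ⟨v, hv_def⟩ : ∃ v : E, v = b⁻¹ • (ψ - P ψ) := ⟨_, rfl⟩
  rw [← ha_def, ← hb_def, ← hu_def, ← hv_def]
  rw [← ha_def] at hsin
  have ha : a ≠ 0 := ha_def ▸ norm_ne_zero_iff.mpr hPψ
  have hb : b ≠ 0 := hb_def ▸ norm_ne_zero_iff.mpr hPψ'
  have hPPψ : P (P ψ) = P ψ := by
    have := congrArg (fun f : E →L[ℝ] E => f ψ) hP2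
    simpa using this
  have hPw : P (ψ - P ψ) = 0 := by simp [map_sub, hPPψ]
  have hsym := (ContinuousLinearMap.isSelfAdjoint_iff_isSymmetric.mp hPsa)
  have h1 : ⟪ψ, P ψ⟫ = a ^ 2 := by
    have h := hsym ψ (P ψ)
    simp only [ContinuousLinearMap.coe_coe] at h
    rw [hPPψ] at h
    rw [← h, real_inner_self_eq_norm_sq, ← ha_def]
  have hb2' : b ^ 2 = ‖ψ‖ ^ 2 - 2 * ⟪ψ, P ψ⟫ + a ^ 2 := by
    rw [hb_def, ha_def]; exact norm_sub_sq_real ψ (P ψ)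
  have h2 : ⟪ψ, ψ - P ψ⟫ = b ^ 2 := by
    rw [inner_sub_right, real_inner_self_eq_norm_sq]
    rw [hb2', h1, hψ]; ring
  have hbcos : b = Real.cos θ := by
    have hcos0 : 0 ≤ Real.cos θ :=
      Real.cos_nonneg_of_mem_Icc ⟨by linarith [Real.pi_pos], hθ1⟩
    have hsq : b ^ 2 = Real.cos θ ^ 2 := by
      have hs := Real.sin_sq_add_cos_sq θ
      rw [hb2', h1, hψ, ← hsin]; nlinarith
    have hb0 : 0 ≤ b := hb_def ▸ norm_nonneg _
    nlinarith
  have hiu : ⟪ψ, u⟫ = Real.sin θ := by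
    rw [hu_def, real_inner_smul_right, h1, hsin, sq]
    field_simp
  have hiv : ⟪ψ, v⟫ = Real.cos θ := by
    rw [hv_def, real_inner_smul_right, h2, ← hbcos, sq]
    field_simp
  have hψeq : ψ = Real.sin θ • u + Real.cos θ • v := by
    rw [hu_def, hv_def, smul_smul, smul_smul, hsin, ← hbcos,
      mul_inv_cancel₀ ha, mul_inv_cancel₀ hb, one_smul, one_smul]
    abel
  have hPu : P u = u := by rw [hu_def, map_smul, hPPψ]
  have hPv : P v = 0 := by rw [hv_def, map_smul, hPw, smul_zero]
  have hRPu : RP u = u := by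
    rw [hRP, ContinuousLinearMap.sub_apply, ContinuousLinearMap.smul_apply, hPu,
      ContinuousLinearMap.one_apply]
    module
  have hRPv : RP v = -v := by
    rw [hRP, ContinuousLinearMap.sub_apply, ContinuousLinearMap.smul_apply, hPv,
      ContinuousLinearMap.one_apply, smul_zero, zero_sub]
  have hG : ∀ α : ℝ, (-(Rψ * RP)) (Real.sin α • u + Real.cos α • v)
      = Real.sin (α + 2 * θ) • u + Real.cos (α + 2 * θ) • v := by
    intro α
    have hs := Real.sin_sq_add_cos_sq θ
    have e1 : Real.sin (α + 2 * θ)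
        = Real.sin α * (1 - 2 * Real.sin θ ^ 2) + 2 * Real.cos α * Real.sin θ * Real.cos θ := by
      rw [Real.sin_add, Real.sin_two_mul, Real.cos_two_mul]
      linear_combination (2 * Real.sin α) * hs
    have e2 : Real.cos (α + 2 * θ)
        = Real.cos α * (2 * Real.cos θ ^ 2 - 1) - 2 * Real.sin α * Real.sin θ * Real.cos θ := by
      rw [Real.cos_add, Real.sin_two_mul, Real.cos_two_mul]; ring
    have happ : (-(Rψ * RP)) (Real.sin α • u + Real.cos α • v)
        = -(Rψ (Real.sin α • u - Real.cos α • v)) := by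
      simp [ContinuousLinearMap.mul_apply, map_smul, hRPu, hRPv]
      module
    have hin : ⟪ψ, Real.sin α • u - Real.cos α • v⟫
        = Real.sin α * Real.sin θ - Real.cos α * Real.cos θ := by
      rw [inner_sub_right, real_inner_smul_right, real_inner_smul_right, hiu, hiv]
    rw [happ, hRψ, hin, e1, e2, hψeq]
    match_scalars <;> ring
  have main : ∀ n : ℕ, ((-(Rψ * RP)) ^ n) ψ
      = Real.sin ((2 * n + 1) * θ) • u + Real.cos ((2 * n + 1) * θ) • v := by
    intro n
    induction n with
    | zero => simpa using hψeq
    | succ k ih =>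
      rw [pow_succ', ContinuousLinearMap.mul_apply, ih, hG]
      have h : (2 * (k : ℝ) + 1) * θ + 2 * θ = (2 * ((k : ℝ) + 1) + 1) * θ := by ring
      rw [h]; push_cast; ring_nf
  exact main m
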